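/- For every n×n symmetric matrix A over F_2 arising as adjacency matrix of a graph on n vertices, and every k-subset K of [n] with k ≤ n/2, if the submatrix A_{K×K̄} (rows in K, columns in the complement of K) has rank k over F_2, then the reduction to K of the associated graph state |G⟩ = 2^{−n/2} Σ_{c ∈ F_2^n} (−1)^{c·Ã·cᵀ} |c⟩ is the maximally mixed state I/2^k. -/

import Mathlib

/-- Combine an assignment on `S` and on its complement into a full assignment. -/
def glue {n : ℕ} (S : Finset (Fin n)) (a : {x // x ∈ S} → ZMod 2)
    (b : {x // x ∈ Sᶜ} → ZMod 2) : Fin n → ZMod 2 :=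
  fun i => if h : i ∈ S then a ⟨i, h⟩ else b ⟨i, Finset.mem_compl.mpr h⟩

/-- The reduced density matrix of the pure state `ψ` on the set of qubits `S`
(partial trace of `|ψ⟩⟨ψ|` over the qubits outside `S`). -/
noncomputable def reduced {n : ℕ} (ψ : (Fin n → ZMod 2) → ℂ) (S : Finset (Fin n)) :
    Matrix ({x // x ∈ S} → ZMod 2) ({x // x ∈ S} → ZMod 2) ℂ :=
  Matrix.of fun a b => ∑ c : {x // x ∈ Sᶜ} → ZMod 2,
    ψ (glue S a c) * star (ψ (glue S b c))

/-- The graph state `|G⟩ = 2^{-n/2} Σ_c (-1)^{c·Ã·cᵀ} |c⟩` associated with the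
adjacency matrix `A` over `F_2`, where `Ã` is the strictly upper-triangular
part of `A`. -/
noncomputable def graphState {n : ℕ} (A : Matrix (Fin n) (Fin n) (ZMod 2)) :
    (Fin n → ZMod 2) → ℂ :=
  fun c => ((Real.sqrt (2 ^ n))⁻¹ : ℝ) *
    (-1 : ℂ) ^ (∑ i : Fin n, ∑ j : Fin n,
      if (i : ℕ) < (j : ℕ) then A i j * c i * c j else 0 : ZMod 2).val

/- ## Auxiliary material -/

noncomputable def χ (u : ZMod 2) : ℂ := (-1) ^ u.val

lemma χ_add (u v : ZMod 2) : χ (u + v) = χ u * χ v := by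
  obtain rfl | rfl : u = 0 ∨ u = 1 := by revert u; decide
  all_goals obtain rfl | rfl : v = 0 ∨ v = 1 := by revert v; decide
  all_goals simp [χ, show ((1:ZMod 2) + 1) = 0 by decide, show ZMod.val (1:ZMod 2) = 1 by decide]

lemma χ_zero : χ 0 = 1 := by simp [χ]
lemma χ_one : χ 1 = -1 := by simp [χ, show ZMod.val (1:ZMod 2) = 1 by decide]
lemma star_χ (u : ZMod 2) : star (χ u) = χ u := by
  fin_cases u <;> simp [χ]

lemma sum_χ_eq_zero {ι : Type*} [Fintype ι] [DecidableEq ι] (w : ι → ZMod 2) (hw : w ≠ 0) :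
    ∑ c : ι → ZMod 2, χ (∑ j, w j * c j) = 0 := by
  obtain ⟨j0, hj0⟩ : ∃ j, w j ≠ 0 := by
    by_contra h; push_neg at h; exact hw (funext h)
  have hj1 : w j0 = 1 := by
    have h2 : ∀ x : ZMod 2, x ≠ 0 → x = 1 := by decide
    exact h2 _ hj0
  set d : ι → ZMod 2 := fun j => if j = j0 then 1 else 0 with hd
  have key : ∀ c : ι → ZMod 2, χ (∑ j, w j * (c + d) j) = - χ (∑ j, w j * c j) := by
    intro c
    have : ∑ j, w j * (c + d) j = (∑ j, w j * c j) + 1 := by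
      have : ∀ j, w j * (c + d) j = w j * c j + w j * d j := fun j => by
        simp [Pi.add_apply, mul_add]
      rw [Finset.sum_congr rfl fun j _ => this j, Finset.sum_add_distrib]
      congr 1
      simp [hd, mul_ite, Finset.sum_ite_eq', hj1]
    rw [this, χ_add, χ_one]; ring
  have := Fintype.sum_equiv (Equiv.addRight d) (fun c => χ (∑ j, w j * (c + d) j))
      (fun c => χ (∑ j, w j * c j)) (fun c => rfl)
  have h2 : ∑ c : ι → ZMod 2, χ (∑ j, w j * c j)
      = - ∑ c : ι → ZMod 2, χ (∑ j, w j * c j) := by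
    calc ∑ c : ι → ZMod 2, χ (∑ j, w j * c j)
        = ∑ c : ι → ZMod 2, χ (∑ j, w j * (c + d) j) := this.symm
      _ = ∑ c : ι → ZMod 2, - χ (∑ j, w j * c j) := by
          exact Finset.sum_congr rfl fun c _ => key c
      _ = _ := by rw [Finset.sum_neg_distrib]
  have h3 : (∑ c : ι → ZMod 2, χ (∑ j, w j * c j))
      + (∑ c : ι → ZMod 2, χ (∑ j, w j * c j)) = 0 := by
    linear_combination h2
  exact add_self_eq_zero.mp h3

lemma vecMul_inj {m l : Type*} [Fintype m] [Fintype l] [DecidableEq m] [DecidableEq l]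
    (B : Matrix m l (ZMod 2)) (h : B.rank = Fintype.card m)
    (v : m → ZMod 2) (hv : Matrix.vecMul v B = 0) : v = 0 := by
  have hrk : (B.transpose).rank = Fintype.card m := by rw [Matrix.rank_transpose]; exact h
  have hker : LinearMap.ker (B.transpose).mulVecLin = ⊥ := by
    have h1 := LinearMap.finrank_range_add_finrank_ker (B.transpose).mulVecLin
    rw [Module.finrank_pi] at h1
    have h2 : Module.finrank (ZMod 2) ↥(LinearMap.range (B.transpose).mulVecLin)
        = Fintype.card m := hrk
    have h3 : Module.finrank (ZMod 2) ↥(LinearMap.ker (B.transpose).mulVecLin) = 0 := by omega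
    exact Submodule.finrank_eq_zero.mp h3
  have : (B.transpose).mulVecLin v = 0 := by
    rw [Matrix.mulVecLin_apply, Matrix.mulVec_transpose, hv]
  rw [← LinearMap.mem_ker, hker, Submodule.mem_bot] at this
  exact this

lemma split {n : ℕ} (A : Matrix (Fin n) (Fin n) (ZMod 2)) (hsymm : A.IsSymm)
    (K : Finset (Fin n)) (a b : {x // x ∈ K} → ZMod 2) (c : {x // x ∈ Kᶜ} → ZMod 2) :
    (∑ i : Fin n, ∑ j : Fin n, if (i:ℕ) < (j:ℕ) then A i j * glue K a c i * glue K a c j else 0)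
  + (∑ i : Fin n, ∑ j : Fin n, if (i:ℕ) < (j:ℕ) then A i j * glue K b c i * glue K b c j else 0)
  = (∑ p : {x // x ∈ K}, ∑ q : {x // x ∈ K}, if ((p:Fin n):ℕ) < ((q:Fin n):ℕ)
      then A p q * (a p * a q + b p * b q) else 0)
  + ∑ j : {x // x ∈ Kᶜ}, (∑ i : {x // x ∈ K}, A (i:Fin n) (j:Fin n) * (a i + b i)) * c j := by
  classical
  set x := glue K a c with hxdef
  set y := glue K b c with hydef
  have hxK : ∀ (i : Fin n) (h : i ∈ K), x i = a ⟨i, h⟩ := by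
    intro i h; simp [hxdef, glue, dif_pos h]
  have hyK : ∀ (i : Fin n) (h : i ∈ K), y i = b ⟨i, h⟩ := by
    intro i h; simp [hydef, glue, dif_pos h]
  have hxC : ∀ (i : Fin n) (h : i ∉ K), x i = c ⟨i, Finset.mem_compl.mpr h⟩ := by
    intro i h; simp [hxdef, glue, dif_neg h]
  have hyC : ∀ (i : Fin n) (h : i ∉ K), y i = c ⟨i, Finset.mem_compl.mpr h⟩ := by
    intro i h; simp [hydef, glue, dif_neg h]
  -- combine the two sums
  set F : Fin n → Fin n → ZMod 2 :=
    fun i j => if (i:ℕ) < (j:ℕ) then A i j * x i * x j + A i j * y i * y j else 0 with hF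
  have lhs_eq : (∑ i : Fin n, ∑ j : Fin n, if (i:ℕ) < (j:ℕ) then A i j * x i * x j else 0)
      + (∑ i : Fin n, ∑ j : Fin n, if (i:ℕ) < (j:ℕ) then A i j * y i * y j else 0)
      = ∑ i : Fin n, ∑ j : Fin n, F i j := by
    rw [← Finset.sum_add_distrib]
    refine Finset.sum_congr rfl fun i _ => ?_
    rw [← Finset.sum_add_distrib]
    refine Finset.sum_congr rfl fun j _ => ?_
    simp [hF, ite_add_ite]
  rw [lhs_eq]
  -- split into four pieces
  have hsplit : (∑ i : Fin n, ∑ j : Fin n, F i j)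
      = ((∑ i ∈ K, ∑ j ∈ K, F i j) + (∑ i ∈ K, ∑ j ∈ Kᶜ, F i j))
      + ((∑ i ∈ Kᶜ, ∑ j ∈ K, F i j) + (∑ i ∈ Kᶜ, ∑ j ∈ Kᶜ, F i j)) := by
    rw [← Finset.sum_add_sum_compl K (fun i => ∑ j : Fin n, F i j)]
    congr 1 <;>
    · rw [← Finset.sum_add_distrib]
      exact Finset.sum_congr rfl fun i _ => (Finset.sum_add_sum_compl K _).symm
  rw [hsplit]
  -- compl-compl piece vanishes
  have hCC : (∑ i ∈ Kᶜ, ∑ j ∈ Kᶜ, F i j) = 0 := by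
    refine Finset.sum_eq_zero fun i hi => Finset.sum_eq_zero fun j hj => ?_
    have hi' := Finset.mem_compl.mp hi
    have hj' := Finset.mem_compl.mp hj
    simp only [hF, hxC i hi', hxC j hj', hyC i hi', hyC j hj',
      CharTwo.add_self_eq_zero, ite_self]
  -- K-K piece
  have hKK : (∑ i ∈ K, ∑ j ∈ K, F i j)
      = ∑ p : {x // x ∈ K}, ∑ q : {x // x ∈ K}, if ((p:Fin n):ℕ) < ((q:Fin n):ℕ)
          then A p q * (a p * a q + b p * b q) else 0 := by
    rw [← Finset.sum_coe_sort K (fun i => ∑ j ∈ K, F i j)]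
    refine Finset.sum_congr rfl fun p _ => ?_
    rw [← Finset.sum_coe_sort K (fun j => F p j)]
    refine Finset.sum_congr rfl fun q _ => ?_
    simp only [hF, hxK p p.2, hxK q q.2, hyK p p.2, hyK q q.2]
    congr 1
    ring
  -- cross pieces
  have hcross : (∑ i ∈ K, ∑ j ∈ Kᶜ, F i j) + (∑ i ∈ Kᶜ, ∑ j ∈ K, F i j)
      = ∑ j : {x // x ∈ Kᶜ}, (∑ i : {x // x ∈ K}, A (i:Fin n) (j:Fin n) * (a i + b i)) * c j := by
    have e1 : (∑ i ∈ Kᶜ, ∑ j ∈ K, F i j) = ∑ i ∈ K, ∑ j ∈ Kᶜ, F j i := Finset.sum_comm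
    rw [e1, ← Finset.sum_add_distrib]
    have e2 : ∀ i ∈ K, ((∑ j ∈ Kᶜ, F i j) + ∑ j ∈ Kᶜ, F j i)
        = ∑ j ∈ Kᶜ, A i j * (x i + y i) * x j := by
      intro i hi
      rw [← Finset.sum_add_distrib]
      refine Finset.sum_congr rfl fun j hj => ?_
      have hij : (i:ℕ) ≠ (j:ℕ) := by
        intro h
        exact (Finset.mem_compl.mp hj) (by rwa [Fin.val_eq_val] at h ▸ hi)
      have hyx : y j = x j := by
        rw [hxC j (Finset.mem_compl.mp hj), hyC j (Finset.mem_compl.mp hj)]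
      have hA : A j i = A i j := hsymm.apply i j
      rcases Nat.lt_or_ge (i:ℕ) (j:ℕ) with h | h
      · have h' : ¬ ((j:ℕ) < (i:ℕ)) := by omega
        simp only [hF, if_pos h, if_neg h', add_zero, hyx, hA]
        ring
      · have h' : (j:ℕ) < (i:ℕ) := by omega
        have h'' : ¬ ((i:ℕ) < (j:ℕ)) := by omega
        simp only [hF, if_pos h', if_neg h'', zero_add, hyx, hA]
        ring
    rw [Finset.sum_congr rfl e2, Finset.sum_comm,
      ← Finset.sum_coe_sort Kᶜ (fun j => ∑ i ∈ K, A i j * (x i + y i) * x j)]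
    refine Finset.sum_congr rfl fun q _ => ?_
    rw [← Finset.sum_mul, hxC q (Finset.mem_compl.mp q.2)]
    congr 1
    · rw [← Finset.sum_coe_sort K (fun i => A i q * (x i + y i))]
      refine Finset.sum_congr rfl fun p _ => ?_
      rw [hxK p p.2, hyK p p.2]
  rw [hCC, add_zero, hKK, add_assoc, hcross]

theorem stmt4 (n k : ℕ) (A : Matrix (Fin n) (Fin n) (ZMod 2))
    (hsymm : A.IsSymm) (hdiag : ∀ i, A i i = 0)
    (K : Finset (Fin n)) (hK : K.card = k) (hk : 2 * k ≤ n)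
    (hrank : (A.submatrix (fun i : {x // x ∈ K} => (i : Fin n))
        (fun j : {x // x ∈ Kᶜ} => (j : Fin n))).rank = k) :
    reduced (graphState A) K = ((2 : ℂ) ^ k)⁻¹ • 1 := by
  classical
  subst hK
  have hk' : K.card ≤ n := by omega
  have hBrank : (A.submatrix (fun i : {x // x ∈ K} => (i : Fin n))
      (fun j : {x // x ∈ Kᶜ} => (j : Fin n))).rank = Fintype.card {x // x ∈ K} := by
    rw [Fintype.card_coe]; exact hrank
  ext a b
  -- the quadratic form
  set Q : (Fin n → ZMod 2) → ZMod 2 := fun x => ∑ i : Fin n, ∑ j : Fin n,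
      if (i : ℕ) < (j : ℕ) then A i j * x i * x j else 0 with hQ
  have key : ∀ x y : Fin n → ZMod 2, graphState A x * star (graphState A y)
      = (((2:ℝ)^n)⁻¹ : ℂ) * χ (Q x + Q y) := by
    intro x y
    have h1 : graphState A x = ((Real.sqrt (2 ^ n))⁻¹ : ℝ) * χ (Q x) := rfl
    have h2 : graphState A y = ((Real.sqrt (2 ^ n))⁻¹ : ℝ) * χ (Q y) := rfl
    rw [h1, h2, star_mul', star_χ, Complex.star_def, Complex.conj_ofReal,
      mul_mul_mul_comm, ← χ_add, ← Complex.ofReal_mul,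
      ← mul_inv, Real.mul_self_sqrt (by positivity)]
    push_cast
    ring
  set Q2 : ZMod 2 := ∑ p : {x // x ∈ K}, ∑ q : {x // x ∈ K},
      if ((p:Fin n):ℕ) < ((q:Fin n):ℕ) then A p q * (a p * a q + b p * b q) else 0 with hQ2
  set w : {x // x ∈ Kᶜ} → ZMod 2 :=
      fun j => ∑ i : {x // x ∈ K}, A (i:Fin n) (j:Fin n) * (a i + b i) with hw
  have entry : reduced (graphState A) K a b
      = (((2:ℝ)^n)⁻¹ : ℂ) * χ Q2 * ∑ c : {x // x ∈ Kᶜ} → ZMod 2, χ (∑ j, w j * c j) := by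
    simp only [reduced, Matrix.of_apply]
    rw [Finset.mul_sum]
    refine Finset.sum_congr rfl fun c _ => ?_
    rw [key, split A hsymm K a b c, χ_add, ← mul_assoc]
  rw [entry]
  by_cases hab : a = b
  · subst hab
    have hQ2z : Q2 = 0 := by
      rw [hQ2]
      refine Finset.sum_eq_zero fun p _ => Finset.sum_eq_zero fun q _ => ?_
      simp [CharTwo.add_self_eq_zero]
    have hwz : w = 0 := by
      funext j
      rw [hw]
      exact Finset.sum_eq_zero fun i _ => by simp [CharTwo.add_self_eq_zero]
    rw [hQ2z, χ_zero, mul_one]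
    have hs : ∑ c : {x // x ∈ Kᶜ} → ZMod 2, χ (∑ j, w j * c j)
        = (2:ℂ) ^ (n - K.card) := by
      have : ∀ c : {x // x ∈ Kᶜ} → ZMod 2, χ (∑ j, w j * c j) = 1 := by
        intro c; rw [hwz]; simp [χ_zero]
      rw [Finset.sum_congr rfl fun c _ => this c, Finset.sum_const, Finset.card_univ]
      have hcard : Fintype.card ({x // x ∈ Kᶜ} → ZMod 2) = 2 ^ (n - K.card) := by
        rw [Fintype.card_fun, Fintype.card_coe, Finset.card_compl, ZMod.card,
          Fintype.card_fin]
      rw [hcard]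
      simp
    rw [hs, Matrix.smul_apply, Matrix.one_apply_eq, smul_eq_mul, mul_one]
    have hpow : (2:ℂ) ^ (n - K.card) * 2 ^ K.card = 2 ^ n := by
      rw [← pow_add, Nat.sub_add_cancel hk']
    push_cast
    field_simp
    linear_combination hpow
  · have hwne : w ≠ 0 := by
      intro hw0
      apply hab
      have hv : (fun i : {x // x ∈ K} => a i + b i) = 0 := by
        refine vecMul_inj _ hBrank _ ?_
        funext j
        have : Matrix.vecMul (fun i : {x // x ∈ K} => a i + b i)
            (A.submatrix (fun i : {x // x ∈ K} => (i : Fin n))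
              (fun j : {x // x ∈ Kᶜ} => (j : Fin n))) j = w j := by
          rw [hw, Matrix.vecMul, dotProduct]
          exact Finset.sum_congr rfl fun i _ => by
            simp [Matrix.submatrix_apply, mul_comm]
        rw [this, hw0]
      funext i
      have hi := congrFun hv i
      simp only [Pi.zero_apply] at hi
      have h2 : ∀ u v : ZMod 2, u + v = 0 → u = v := by decide
      exact h2 _ _ hi
    rw [sum_χ_eq_zero w hwne, mul_zero]
    rw [Matrix.smul_apply, Matrix.one_apply_ne hab, smul_eq_mul, mul_zero]
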